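/- arXiv:2503.20809 — 2 statements merged into one kernel-verified Lean document; each statement's English description precedes it below -/
import Mathlib

section
/- Let n ≥ 1 and p ∈ [1,∞). If f ∈ L^p(ℝⁿ) satisfies N_{τ,p}(f) < ∞ for some τ ∈ (0,∞), then lim_{s→0⁺} s ∫₀¹ t^{-(1+ps/2)} ∫_{ℝⁿ} ∫_{ℝⁿ} p_t(x,y) |f(y) − f(x)|^p dy dx dt = 0. -/
open MeasureTheory Real Filter Topology Set
open scoped ENNReal

/-- The classical heat kernel on `ℝⁿ`. -/
noncomputable def heatKernel (n : ℕ) (t : ℝ) (x y : EuclideanSpace ℝ (Fin n)) : ℝ :=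
  (4 * π * t) ^ (-(n : ℝ) / 2) * Real.exp (-‖x - y‖ ^ 2 / (4 * t))

/-- `N_{s,p}(f)^p = ∫₀^∞ t^{-(1+ps/2)} ∫∫ p_t(x,y)|f(y)-f(x)|^p dy dx dt`. -/
noncomputable def besovIntegral (n : ℕ) (p s : ℝ) (f : EuclideanSpace ℝ (Fin n) → ℝ) : ℝ≥0∞ :=
  ∫⁻ t in Set.Ioi (0:ℝ), ENNReal.ofReal (t ^ (-(1 + p * s / 2))) *
    ∫⁻ x, ∫⁻ y, ENNReal.ofReal (heatKernel n t x y * |f y - f x| ^ p)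

/-- short-time part: if `f ∈ L^p(ℝⁿ)` and `N_{τ,p}(f) < ∞` for some `τ > 0`,
then `lim_{s→0⁺} s ∫₀¹ t^{-(1+ps/2)} ∫∫ p_t(x,y)|f(y)-f(x)|^p dy dx dt = 0`. -/
theorem statement2 (n : ℕ) (hn : 1 ≤ n) (p : ℝ) (hp : 1 ≤ p)
    (f : EuclideanSpace ℝ (Fin n) → ℝ) (hf : MemLp f (ENNReal.ofReal p))
    (τ : ℝ) (hτ : 0 < τ) (hfin : besovIntegral n p τ f < ⊤) :
    Tendsto (fun s : ℝ => ENNReal.ofReal s *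
        ∫⁻ t in Set.Ioc (0:ℝ) 1, ENNReal.ofReal (t ^ (-(1 + p * s / 2))) *
          ∫⁻ x, ∫⁻ y, ENNReal.ofReal (heatKernel n t x y * |f y - f x| ^ p))
      (𝓝[>] (0:ℝ)) (𝓝 0) := by
  set G : ℝ → ℝ≥0∞ := fun t =>
    ∫⁻ x, ∫⁻ y, ENNReal.ofReal (heatKernel n t x y * |f y - f x| ^ p) with hG
  set C : ℝ≥0∞ := ∫⁻ t in Set.Ioc (0:ℝ) 1,
      ENNReal.ofReal (t ^ (-(1 + p * τ / 2))) * G t with hC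
  have hCle : C ≤ besovIntegral n p τ f := by
    rw [hC, besovIntegral]
    exact lintegral_mono_set Ioc_subset_Ioi_self
  have hCtop : C ≠ ⊤ := (lt_of_le_of_lt hCle hfin).ne
  -- upper bound function tends to 0
  have hub : Tendsto (fun s : ℝ => ENNReal.ofReal s * C) (𝓝[>] (0:ℝ)) (𝓝 0) := by
    have h1 : Tendsto (fun s : ℝ => ENNReal.ofReal s) (𝓝[>] (0:ℝ)) (𝓝 0) := by
      have h0 : Tendsto (id : ℝ → ℝ) (𝓝[>] (0:ℝ)) (𝓝 (0:ℝ)) :=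
        tendsto_id.mono_right nhdsWithin_le_nhds
      simpa using ENNReal.tendsto_ofReal h0
    have := ENNReal.Tendsto.mul_const h1 (Or.inr hCtop)
    simpa using this
  refine tendsto_of_tendsto_of_tendsto_of_le_of_le' tendsto_const_nhds hub
    (Eventually.of_forall fun _ => zero_le) ?_
  filter_upwards [Ioc_mem_nhdsGT_of_mem (Set.left_mem_Ico.mpr hτ)] with s hs
  gcongr ENNReal.ofReal s * ?_
  refine setLIntegral_mono' measurableSet_Ioc fun t ht => ?_
  gcongr ENNReal.ofReal ?_ * G t
  refine Real.rpow_le_rpow_of_exponent_ge ht.1 ht.2 ?_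
  have : p * s ≤ p * τ := by
    have hp0 : (0:ℝ) ≤ p := le_trans zero_le_one hp
    exact mul_le_mul_of_nonneg_left hs.2 hp0
  linarith
end

section
/- Let n ≥ 1. For every f ∈ L¹(ℝⁿ), liminf_{s→0⁺} s ∫₁^∞ t^{-(1+s/2)} ∫_{ℝⁿ} ∫_{ℝⁿ} p_t(x,y) |f(y) − f(x)| dy dx dt ≥ 4 ‖f‖_{L¹}. -/
open MeasureTheory Real Filter Topology Set
open scoped ENNReal

lemma heatKernel_nonneg {n : ℕ} {t : ℝ} (ht : 0 < t) (x y : EuclideanSpace ℝ (Fin n)) :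
    0 ≤ heatKernel n t x y := by
  unfold heatKernel
  have : (0:ℝ) < 4 * π * t := by positivity
  positivity

lemma heatKernel_symm {n : ℕ} (t : ℝ) (x y : EuclideanSpace ℝ (Fin n)) :
    heatKernel n t x y = heatKernel n t y x := by
  unfold heatKernel; rw [norm_sub_rev]

lemma heatKernel_le {n : ℕ} {t : ℝ} (ht : 0 < t) (x y : EuclideanSpace ℝ (Fin n)) :
    heatKernel n t x y ≤ (4 * π * t) ^ (-(n : ℝ) / 2) := by
  unfold heatKernel
  have h1 : (0:ℝ) < (4 * π * t) ^ (-(n : ℝ) / 2) := by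
    apply Real.rpow_pos_of_pos; positivity
  nth_rewrite 2 [← mul_one ((4 * π * t) ^ (-(n : ℝ) / 2))]
  apply mul_le_mul_of_nonneg_left _ h1.le
  rw [Real.exp_le_one_iff]
  have h0 : (0:ℝ) ≤ ‖x - y‖ ^ 2 := by positivity
  have h4 : (0:ℝ) < 4 * t := by positivity
  apply div_nonpos_of_nonpos_of_nonneg <;> linarith

lemma heatKernel_continuous {n : ℕ} (t : ℝ) :
    Continuous (fun p : EuclideanSpace ℝ (Fin n) × EuclideanSpace ℝ (Fin n) =>
      heatKernel n t p.1 p.2) := by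
  unfold heatKernel
  fun_prop

lemma lintegral_heatKernel {n : ℕ} {t : ℝ} (ht : 0 < t) (x : EuclideanSpace ℝ (Fin n)) :
    ∫⁻ y, ENNReal.ofReal (heatKernel n t x y) = 1 := by
  have hb : (0:ℝ) < 1 / (4 * t) := by positivity
  have hmeas : Measurable fun z : EuclideanSpace ℝ (Fin n) =>
      ENNReal.ofReal ((4 * π * t) ^ (-(n : ℝ) / 2) * Real.exp (-‖z‖ ^ 2 / (4 * t))) := by
    apply ENNReal.measurable_ofReal.comp
    fun_prop
  have hint : Integrable (fun z : EuclideanSpace ℝ (Fin n) =>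
      (4 * π * t) ^ (-(n : ℝ) / 2) * Real.exp (-‖z‖ ^ 2 / (4 * t))) := by
    apply Integrable.const_mul
    have := (GaussianFourier.integrable_cexp_neg_mul_sq_norm_add
      (V := EuclideanSpace ℝ (Fin n)) (b := ((1 / (4 * t) : ℝ) : ℂ))
      (by simpa using hb) 0 0).norm
    apply this.congr
    filter_upwards with z
    rw [zero_mul, add_zero,
      show (-((1/(4*t):ℝ):ℂ) * ((‖z‖:ℝ):ℂ)^2 : ℂ) = ((-‖z‖^2/(4*t) : ℝ) : ℂ) by
        push_cast; ring,
      Complex.norm_exp, Complex.ofReal_re]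
  calc ∫⁻ y, ENNReal.ofReal (heatKernel n t x y)
      = ∫⁻ y, ENNReal.ofReal ((4 * π * t) ^ (-(n : ℝ) / 2) * Real.exp (-‖x - y‖ ^ 2 / (4 * t))) := rfl
    _ = ∫⁻ z, ENNReal.ofReal ((4 * π * t) ^ (-(n : ℝ) / 2) * Real.exp (-‖z‖ ^ 2 / (4 * t))) := by
        exact (Measure.measurePreserving_sub_left volume x).lintegral_comp hmeas
    _ = ENNReal.ofReal (∫ z : EuclideanSpace ℝ (Fin n),
          (4 * π * t) ^ (-(n : ℝ) / 2) * Real.exp (-‖z‖ ^ 2 / (4 * t))) := by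
        rw [← ofReal_integral_eq_lintegral_ofReal hint]
        filter_upwards with z
        positivity
    _ = 1 := by
        rw [integral_const_mul]
        have : ∀ z : EuclideanSpace ℝ (Fin n),
            Real.exp (-‖z‖ ^ 2 / (4 * t)) = Real.exp (-(1/(4*t)) * ‖z‖ ^ 2) := by
          intro z; congr 1; ring
        simp_rw [this]
        rw [GaussianFourier.integral_rexp_neg_mul_sq_norm hb]
        rw [finrank_euclideanSpace_fin]
        have : π / (1 / (4 * t)) = 4 * π * t := by field_simp
        rw [this, ← Real.rpow_add (by positivity), ENNReal.ofReal_eq_one]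
        rw [show -(n:ℝ)/2 + n/2 = 0 by ring, Real.rpow_zero]

section Main
variable {n : ℕ}

local notation "E" => EuclideanSpace ℝ (Fin n)

lemma lintegral_heatKernel_mul_const {t : ℝ} (ht : 0 < t) (x : E) (c : ℝ) :
    ∫⁻ y, ENNReal.ofReal (heatKernel n t x y * c) = ENNReal.ofReal c := by
  have : ∀ y : E, ENNReal.ofReal (heatKernel n t x y * c)
      = ENNReal.ofReal (heatKernel n t x y) * ENNReal.ofReal c := fun y =>
    ENNReal.ofReal_mul (heatKernel_nonneg ht x y)
  simp_rw [this]
  rw [lintegral_mul_const' _ _ ENNReal.ofReal_ne_top, lintegral_heatKernel ht, one_mul]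

lemma lintegral_lintegral_heatKernel_mul_right {g : E → ℝ} (hgm : Measurable g)
    {t : ℝ} (ht : 0 < t) :
    ∫⁻ x, ∫⁻ y, ENNReal.ofReal (heatKernel n t x y * |g y|)
      = ∫⁻ y, ENNReal.ofReal |g y| := by
  have hmeas : Measurable (Function.uncurry fun x y : E =>
      ENNReal.ofReal (heatKernel n t x y * |g y|)) := by
    apply ENNReal.measurable_ofReal.comp
    exact (heatKernel_continuous t).measurable.mul ((hgm.comp measurable_snd).abs)
  rw [lintegral_lintegral_swap hmeas.aemeasurable]
  congr 1
  ext y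
  have : ∀ x : E, heatKernel n t x y = heatKernel n t y x := fun x => heatKernel_symm t x y
  simp_rw [this]
  exact lintegral_heatKernel_mul_const ht y |g y|

lemma abs_add_abs_le (a b : ℝ) : |a| + |b| ≤ |b - a| + 2 * min |a| |b| := by
  rcases le_total |a| |b| with h | h
  · rw [min_eq_left h]
    have := abs_sub_abs_le_abs_sub b a
    linarith
  · rw [min_eq_right h]
    have h1 := abs_sub_abs_le_abs_sub a b
    have h2 : |a - b| = |b - a| := abs_sub_comm a b
    linarith

lemma key_ineq {g : E → ℝ} (hgm : Measurable g) (hg : Integrable g)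
    {t : ℝ} (ht : 0 < t) :
    2 * ∫⁻ x, ENNReal.ofReal |g x| ≤
      (∫⁻ x, ∫⁻ y, ENNReal.ofReal (heatKernel n t x y * |g y - g x|)) +
      2 * ∫⁻ x, min (ENNReal.ofReal |g x|)
        (ENNReal.ofReal ((4 * π * t) ^ (-(n : ℝ) / 2)) * ∫⁻ y, ENNReal.ofReal |g y|) := by
  set N : ℝ≥0∞ := ∫⁻ x, ENNReal.ofReal |g x| with hN
  set C : ℝ≥0∞ := ENNReal.ofReal ((4 * π * t) ^ (-(n : ℝ) / 2)) with hC
  -- measurability helpers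
  have hmJ : Measurable (Function.uncurry fun x y : E =>
      ENNReal.ofReal (heatKernel n t x y * |g y - g x|)) := by
    apply ENNReal.measurable_ofReal.comp
    exact (heatKernel_continuous t).measurable.mul
      (((hgm.comp measurable_snd).sub (hgm.comp measurable_fst)).abs)
  have hmM : Measurable (Function.uncurry fun x y : E =>
      ENNReal.ofReal (heatKernel n t x y * min |g x| |g y|)) := by
    apply ENNReal.measurable_ofReal.comp
    exact (heatKernel_continuous t).measurable.mul
      (((hgm.comp measurable_fst).abs).min ((hgm.comp measurable_snd).abs))
  -- Step 1 : 2 * N = ∫∫ p (|g x| + |g y|)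
  have step1 : 2 * N = ∫⁻ x, ∫⁻ y, (ENNReal.ofReal (heatKernel n t x y * |g x|)
      + ENNReal.ofReal (heatKernel n t x y * |g y|)) := by
    have inner : ∀ x : E, ∫⁻ y, (ENNReal.ofReal (heatKernel n t x y * |g x|)
        + ENNReal.ofReal (heatKernel n t x y * |g y|))
        = ENNReal.ofReal |g x| + ∫⁻ y, ENNReal.ofReal (heatKernel n t x y * |g y|) := by
      intro x
      have m0 : Measurable fun y : E => ENNReal.ofReal (heatKernel n t x y * |g x|) := by
        apply ENNReal.measurable_ofReal.comp
        exact (((heatKernel_continuous t).comp (Continuous.prodMk_right x)).measurable).mul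
          measurable_const
      rw [lintegral_add_left m0, lintegral_heatKernel_mul_const ht x]
    simp_rw [inner]
    have mabs : Measurable fun x : E => ENNReal.ofReal |g x| := by
      exact ENNReal.measurable_ofReal.comp hgm.abs
    rw [lintegral_add_left mabs,
      lintegral_lintegral_heatKernel_mul_right hgm ht, two_mul]
  -- Step 2 : pointwise inequality
  have step2 : ∀ x y : E,
      ENNReal.ofReal (heatKernel n t x y * |g x|) + ENNReal.ofReal (heatKernel n t x y * |g y|)
      ≤ ENNReal.ofReal (heatKernel n t x y * |g y - g x|)
        + 2 * ENNReal.ofReal (heatKernel n t x y * min |g x| |g y|) := by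
    intro x y
    have hp := heatKernel_nonneg ht x y
    have nn1 : 0 ≤ heatKernel n t x y * |g x| := mul_nonneg hp (abs_nonneg _)
    have nn2 : 0 ≤ heatKernel n t x y * |g y| := mul_nonneg hp (abs_nonneg _)
    have nn3 : 0 ≤ heatKernel n t x y * |g y - g x| := mul_nonneg hp (abs_nonneg _)
    have nn4 : 0 ≤ heatKernel n t x y * min |g x| |g y| :=
      mul_nonneg hp (le_min (abs_nonneg _) (abs_nonneg _))
    rw [← ENNReal.ofReal_add nn1 nn2, ← mul_add]
    have h2 : (2 : ℝ≥0∞) * ENNReal.ofReal (heatKernel n t x y * min |g x| |g y|)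
        = ENNReal.ofReal (2 * (heatKernel n t x y * min |g x| |g y|)) := by
      rw [ENNReal.ofReal_mul (by norm_num : (0:ℝ) ≤ 2)]
      norm_num
    rw [h2, ← ENNReal.ofReal_add nn3 (by linarith)]
    apply ENNReal.ofReal_le_ofReal
    have key := abs_add_abs_le (g x) (g y)
    calc heatKernel n t x y * (|g x| + |g y|)
        ≤ heatKernel n t x y * (|g y - g x| + 2 * min |g x| |g y|) :=
          mul_le_mul_of_nonneg_left key hp
      _ = heatKernel n t x y * |g y - g x| + 2 * (heatKernel n t x y * min |g x| |g y|) := by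
          ring
  -- Step 3 : bound the min integral
  have step3 : ∫⁻ x, ∫⁻ y, ENNReal.ofReal (heatKernel n t x y * min |g x| |g y|)
      ≤ ∫⁻ x, min (ENNReal.ofReal |g x|) (C * N) := by
    apply lintegral_mono
    intro x
    apply le_min
    · calc ∫⁻ y, ENNReal.ofReal (heatKernel n t x y * min |g x| |g y|)
          ≤ ∫⁻ y, ENNReal.ofReal (heatKernel n t x y * |g x|) := by
            apply lintegral_mono; intro y
            exact ENNReal.ofReal_le_ofReal
              (mul_le_mul_of_nonneg_left (min_le_left _ _) (heatKernel_nonneg ht x y))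
        _ = ENNReal.ofReal |g x| := lintegral_heatKernel_mul_const ht x _
    · calc ∫⁻ y, ENNReal.ofReal (heatKernel n t x y * min |g x| |g y|)
          ≤ ∫⁻ y, ENNReal.ofReal ((4 * π * t) ^ (-(n : ℝ) / 2) * |g y|) := by
            apply lintegral_mono; intro y
            apply ENNReal.ofReal_le_ofReal
            exact mul_le_mul (heatKernel_le ht x y) (min_le_right _ _)
              (le_min (abs_nonneg _) (abs_nonneg _)) (Real.rpow_nonneg (by positivity) _)
        _ = C * N := by
            have : ∀ y : E, ENNReal.ofReal ((4 * π * t) ^ (-(n : ℝ) / 2) * |g y|)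
                = C * ENNReal.ofReal |g y| := fun y =>
              ENNReal.ofReal_mul (Real.rpow_nonneg (by positivity) _)
            simp_rw [this]
            exact lintegral_const_mul' _ _ ENNReal.ofReal_ne_top
  -- assemble
  calc 2 * N = ∫⁻ x, ∫⁻ y, (ENNReal.ofReal (heatKernel n t x y * |g x|)
        + ENNReal.ofReal (heatKernel n t x y * |g y|)) := step1
    _ ≤ ∫⁻ x, ∫⁻ y, (ENNReal.ofReal (heatKernel n t x y * |g y - g x|)
        + 2 * ENNReal.ofReal (heatKernel n t x y * min |g x| |g y|)) := by
        apply lintegral_mono; intro x; apply lintegral_mono; intro y; exact step2 x y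
    _ = (∫⁻ x, ∫⁻ y, ENNReal.ofReal (heatKernel n t x y * |g y - g x|))
        + 2 * ∫⁻ x, ∫⁻ y, ENNReal.ofReal (heatKernel n t x y * min |g x| |g y|) := by
        have inner : ∀ x : E, ∫⁻ y, (ENNReal.ofReal (heatKernel n t x y * |g y - g x|)
            + 2 * ENNReal.ofReal (heatKernel n t x y * min |g x| |g y|))
            = (∫⁻ y, ENNReal.ofReal (heatKernel n t x y * |g y - g x|))
              + 2 * ∫⁻ y, ENNReal.ofReal (heatKernel n t x y * min |g x| |g y|) := by
          intro x
          have m1 : Measurable fun y : E => ENNReal.ofReal (heatKernel n t x y * |g y - g x|) := by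
            apply ENNReal.measurable_ofReal.comp
            exact (((heatKernel_continuous t).comp (Continuous.prodMk_right x)).measurable).mul
              ((hgm.sub measurable_const).abs)
          rw [lintegral_add_left m1, lintegral_const_mul' _ _ (by norm_num)]
        simp_rw [inner]
        have m2 : Measurable fun x : E =>
            ∫⁻ y, ENNReal.ofReal (heatKernel n t x y * |g y - g x|) := by
          exact hmJ.lintegral_prod_right'
        rw [lintegral_add_left m2, lintegral_const_mul' _ _ (by norm_num)]
    _ ≤ _ := by
        gcongr

end Main

section Main2
variable {n : ℕ}

local notation "E" => EuclideanSpace ℝ (Fin n)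

lemma exists_threshold (hn : 1 ≤ n) {g : E → ℝ} (hgm : Measurable g) (hg : Integrable g)
    {ε : ℝ≥0∞} (hε : 0 < ε) :
    ∃ T : ℝ, 1 ≤ T ∧ ∀ t : ℝ, T ≤ t →
      2 * (∫⁻ x, ENNReal.ofReal |g x|) ≤
        (∫⁻ x, ∫⁻ y, ENNReal.ofReal (heatKernel n t x y * |g y - g x|)) + ε := by
  set N : ℝ≥0∞ := ∫⁻ x, ENNReal.ofReal |g x| with hNdef
  have mabs : Measurable fun x : E => ENNReal.ofReal |g x| :=
    ENNReal.measurable_ofReal.comp hgm.abs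
  have hNfin : N ≠ ∞ := by
    have := hg.hasFiniteIntegral
    rw [HasFiniteIntegral] at this
    have heq : ∀ x : E, ENNReal.ofReal |g x| = (‖g x‖₊ : ℝ≥0∞) := by
      intro x
      rw [← Real.norm_eq_abs, ofReal_norm_eq_enorm, enorm_eq_nnnorm]
    rw [hNdef]
    simp_rw [heq]
    exact this.ne
  -- Step A: find δ with small truncated integral
  have hhalf : (0 : ℝ≥0∞) < ε / 2 := ENNReal.div_pos hε.ne' (by norm_num)
  have hdc : Tendsto (fun k : ℕ => ∫⁻ x, min (ENNReal.ofReal |g x|) ((k : ℝ≥0∞)⁻¹))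
      atTop (𝓝 0) := by
    have h0 : (0 : ℝ≥0∞) = ∫⁻ _ : E, 0 := lintegral_zero.symm
    rw [h0]
    apply tendsto_lintegral_of_dominated_convergence (fun x => ENNReal.ofReal |g x|)
    · exact fun k => mabs.min measurable_const
    · exact fun k => Eventually.of_forall fun x => min_le_left _ _
    · exact hNfin
    · filter_upwards with x
      exact tendsto_of_tendsto_of_tendsto_of_le_of_le tendsto_const_nhds
        ENNReal.tendsto_inv_nat_nhds_zero (fun k => zero_le) (fun k => min_le_right _ _)
  obtain ⟨k, hk⟩ := (hdc.eventually (Iio_mem_nhds hhalf)).exists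
  set δ : ℝ≥0∞ := (k : ℝ≥0∞)⁻¹ with hδdef
  have hδpos : 0 < δ := ENNReal.inv_pos.2 (ENNReal.natCast_ne_top k)
  -- Step B: C_t * N → 0
  have hC : Tendsto (fun t : ℝ => ENNReal.ofReal ((4 * π * t) ^ (-(n : ℝ) / 2)) * N)
      atTop (𝓝 0) := by
    have h1 : Tendsto (fun t : ℝ => 4 * π * t) atTop atTop := by
      apply Tendsto.const_mul_atTop (by positivity : (0:ℝ) < 4 * π) tendsto_id
    have h2 : Tendsto (fun t : ℝ => (4 * π * t) ^ (-(n : ℝ) / 2)) atTop (𝓝 0) := by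
      have hpos : (0:ℝ) < (n : ℝ) / 2 := by
        have : (1:ℝ) ≤ (n : ℝ) := by exact_mod_cast hn
        linarith
      have := (tendsto_rpow_neg_atTop hpos).comp h1
      simpa [neg_div, Function.comp_def] using this
    have h3 : Tendsto (fun t : ℝ => ENNReal.ofReal ((4 * π * t) ^ (-(n : ℝ) / 2)))
        atTop (𝓝 0) := by
      have := (ENNReal.continuous_ofReal.tendsto 0).comp h2
      simpa [Function.comp_def] using this
    have := ENNReal.Tendsto.mul_const h3 (Or.inr hNfin)
    simpa using this
  obtain ⟨T₀, hT₀⟩ := (Filter.eventually_atTop).1 (hC.eventually (Iio_mem_nhds hδpos))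
  refine ⟨max T₀ 1, le_max_right _ _, fun t ht => ?_⟩
  have ht1 : (1:ℝ) ≤ t := le_trans (le_max_right T₀ 1) ht
  have ht0 : (0:ℝ) < t := lt_of_lt_of_le one_pos ht1
  have hCt : ENNReal.ofReal ((4 * π * t) ^ (-(n : ℝ) / 2)) * N ≤ δ :=
    (hT₀ t (le_trans (le_max_left T₀ 1) ht)).le
  calc 2 * N
      ≤ (∫⁻ x, ∫⁻ y, ENNReal.ofReal (heatKernel n t x y * |g y - g x|)) +
        2 * ∫⁻ x, min (ENNReal.ofReal |g x|)
          (ENNReal.ofReal ((4 * π * t) ^ (-(n : ℝ) / 2)) * N) := key_ineq hgm hg ht0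
    _ ≤ (∫⁻ x, ∫⁻ y, ENNReal.ofReal (heatKernel n t x y * |g y - g x|)) + ε := by
        gcongr
        calc 2 * ∫⁻ x, min (ENNReal.ofReal |g x|)
              (ENNReal.ofReal ((4 * π * t) ^ (-(n : ℝ) / 2)) * N)
            ≤ 2 * ∫⁻ x, min (ENNReal.ofReal |g x|) δ := by
              gcongr

          _ ≤ 2 * (ε / 2) := by gcongr

          _ ≤ ε := by
              rw [two_mul, ENNReal.add_halves]

lemma weight_integral {T s : ℝ} (hT : 1 ≤ T) (hs : 0 < s) :
    ENNReal.ofReal s * ∫⁻ t in Ioi T, ENNReal.ofReal (t ^ (-(1 + s / 2)))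
      = ENNReal.ofReal (2 * T ^ (-s / 2)) := by
  have hT0 : (0:ℝ) < T := lt_of_lt_of_le one_pos hT
  have ha : -(1 + s / 2) < -1 := by linarith
  rw [← ofReal_integral_eq_lintegral_ofReal (integrableOn_Ioi_rpow_of_lt ha hT0)
    ((ae_restrict_iff' measurableSet_Ioi).2 (Eventually.of_forall fun t ht =>
      Real.rpow_nonneg (le_of_lt (lt_trans hT0 ht)) _))]
  rw [integral_Ioi_rpow_of_lt ha hT0]
  rw [← ENNReal.ofReal_mul hs.le]
  congr 1
  have h1 : -(1 + s / 2) + 1 = -(s / 2) := by ring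
  rw [h1]
  have hs' : s ≠ 0 := hs.ne'
  field_simp

end Main2

/-- for every `f ∈ L¹(ℝⁿ)`,
`liminf_{s→0⁺} s ∫₁^∞ t^{-(1+s/2)} ∫∫ p_t(x,y)|f(y)-f(x)| dy dx dt ≥ 4‖f‖₁`. -/
theorem statement5 (n : ℕ) (hn : 1 ≤ n)
    (f : EuclideanSpace ℝ (Fin n) → ℝ) (hf : Integrable f) :
    4 * (∫⁻ x, ENNReal.ofReal |f x|) ≤
      Filter.liminf (fun s : ℝ => ENNReal.ofReal s *
          ∫⁻ t in Set.Ioi (1:ℝ), ENNReal.ofReal (t ^ (-(1 + s / 2))) *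
            ∫⁻ x, ∫⁻ y, ENNReal.ofReal (heatKernel n t x y * |f y - f x|))
        (𝓝[>] (0:ℝ)) := by
  classical
  set g := hf.1.mk f with hgdef
  have hgm : Measurable g := hf.1.stronglyMeasurable_mk.measurable
  have hfg : f =ᵐ[volume] g := hf.1.ae_eq_mk
  have hg : Integrable g := hf.congr hfg
  have hN : (∫⁻ x, ENNReal.ofReal |f x|) = ∫⁻ x, ENNReal.ofReal |g x| :=
    lintegral_congr_ae (by filter_upwards [hfg] with x hx; rw [hx])
  have hJ : ∀ t : ℝ,
      (∫⁻ x, ∫⁻ y, ENNReal.ofReal (heatKernel n t x y * |f y - f x|))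
      = ∫⁻ x, ∫⁻ y, ENNReal.ofReal (heatKernel n t x y * |g y - g x|) := by
    intro t
    apply lintegral_congr_ae
    filter_upwards [hfg] with x hx
    have : (∫⁻ y, ENNReal.ofReal (heatKernel n t x y * |f y - f x|))
        = ∫⁻ y, ENNReal.ofReal (heatKernel n t x y * |g y - f x|) := by
      apply lintegral_congr_ae
      filter_upwards [hfg] with y hy
      rw [hy]
    rw [this, hx]
  rw [hN]
  simp only [hJ]
  set N : ℝ≥0∞ := ∫⁻ x, ENNReal.ofReal |g x| with hNdef
  have hNfin : N ≠ ∞ := by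
    have h1 := hg.hasFiniteIntegral
    rw [HasFiniteIntegral] at h1
    have heq : ∀ x : EuclideanSpace ℝ (Fin n),
        ENNReal.ofReal |g x| = (‖g x‖₊ : ℝ≥0∞) := by
      intro x; rw [← Real.norm_eq_abs, ofReal_norm_eq_enorm, enorm_eq_nnnorm]
    rw [hNdef]
    simp_rw [heq]
    exact h1.ne
  apply ENNReal.le_of_forall_pos_le_add
  intro ε' hε' _
  set eps : ℝ≥0∞ := (ε' : ℝ≥0∞) / 2 with hepsdef
  have heps : 0 < eps :=
    ENNReal.div_pos (by exact_mod_cast hε'.ne') (by norm_num)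
  obtain ⟨T, hT1, hTb⟩ := exists_threshold hn hgm hg heps
  have hT0 : (0:ℝ) < T := lt_of_lt_of_le one_pos hT1
  have hfin2 : 2 * N - eps ≠ ∞ :=
    ne_top_of_le_ne_top (ENNReal.mul_ne_top (by norm_num) hNfin) tsub_le_self
  -- eventual lower bound
  have hev : ∀ᶠ s in 𝓝[>] (0:ℝ),
      ENNReal.ofReal (2 * T ^ (-s / 2)) * (2 * N - eps) ≤
      ENNReal.ofReal s * ∫⁻ t in Set.Ioi (1:ℝ), ENNReal.ofReal (t ^ (-(1 + s / 2))) *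
        ∫⁻ x, ∫⁻ y, ENNReal.ofReal (heatKernel n t x y * |g y - g x|) := by
    filter_upwards [self_mem_nhdsWithin] with s hs
    have hs0 : (0:ℝ) < s := hs
    calc ENNReal.ofReal (2 * T ^ (-s / 2)) * (2 * N - eps)
        = (ENNReal.ofReal s * ∫⁻ t in Set.Ioi T, ENNReal.ofReal (t ^ (-(1 + s / 2))))
            * (2 * N - eps) := by rw [weight_integral hT1 hs0]
      _ = ENNReal.ofReal s * ∫⁻ t in Set.Ioi T,
            ENNReal.ofReal (t ^ (-(1 + s / 2))) * (2 * N - eps) := by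
          rw [mul_assoc, lintegral_mul_const' _ _ hfin2]
      _ ≤ ENNReal.ofReal s * ∫⁻ t in Set.Ioi T, ENNReal.ofReal (t ^ (-(1 + s / 2))) *
            ∫⁻ x, ∫⁻ y, ENNReal.ofReal (heatKernel n t x y * |g y - g x|) := by
          apply mul_le_mul_right
          apply lintegral_mono_ae
          apply (ae_restrict_iff' measurableSet_Ioi).2
          apply Eventually.of_forall
          intro t ht
          exact mul_le_mul_right (tsub_le_iff_right.2 (hTb t ht.le)) _
      _ ≤ ENNReal.ofReal s * ∫⁻ t in Set.Ioi (1:ℝ), ENNReal.ofReal (t ^ (-(1 + s / 2))) *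
            ∫⁻ x, ∫⁻ y, ENNReal.ofReal (heatKernel n t x y * |g y - g x|) := by
          apply mul_le_mul_right
          exact lintegral_mono_set (Ioi_subset_Ioi hT1)
  -- the left side tends to 2 * (2N - eps)
  have hlim : Tendsto (fun s : ℝ => ENNReal.ofReal (2 * T ^ (-s / 2)) * (2 * N - eps))
      (𝓝[>] (0:ℝ)) (𝓝 (2 * (2 * N - eps))) := by
    have hreal : Tendsto (fun s : ℝ => 2 * T ^ (-s / 2)) (𝓝 0) (𝓝 2) := by
      have heq : (fun s : ℝ => 2 * T ^ (-s / 2))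
          = fun s : ℝ => 2 * Real.exp (Real.log T * (-s / 2)) := by
        funext s; rw [Real.rpow_def_of_pos hT0]
      rw [heq]
      have hc : Continuous fun s : ℝ => 2 * Real.exp (Real.log T * (-s / 2)) := by
        fun_prop
      have := hc.tendsto 0
      simpa using this
    have h2 : Tendsto (fun s : ℝ => ENNReal.ofReal (2 * T ^ (-s / 2))) (𝓝[>] (0:ℝ))
        (𝓝 (ENNReal.ofReal 2)) :=
      (ENNReal.continuous_ofReal.tendsto 2).comp (hreal.mono_left nhdsWithin_le_nhds)
    have h3 := ENNReal.Tendsto.mul_const h2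
      (Or.inl (by simp : ENNReal.ofReal 2 ≠ 0)) (b := 2 * N - eps)
    have : ENNReal.ofReal 2 = (2:ℝ≥0∞) := by norm_num
    rwa [this] at h3
  have hlb : 2 * (2 * N - eps) ≤ Filter.liminf (fun s : ℝ => ENNReal.ofReal s *
      ∫⁻ t in Set.Ioi (1:ℝ), ENNReal.ofReal (t ^ (-(1 + s / 2))) *
        ∫⁻ x, ∫⁻ y, ENNReal.ofReal (heatKernel n t x y * |g y - g x|)) (𝓝[>] (0:ℝ)) := by
    have h4 := Filter.liminf_le_liminf hev
    rwa [hlim.liminf_eq] at h4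
  calc 4 * N = 2 * (2 * N) := by ring
    _ ≤ 2 * ((2 * N - eps) + eps) := by
        gcongr
        exact le_tsub_add
    _ = 2 * (2 * N - eps) + 2 * eps := by ring
    _ = 2 * (2 * N - eps) + ε' := by
        have h5 : 2 * eps = (ε' : ℝ≥0∞) := by
          rw [hepsdef, two_mul, ENNReal.add_halves]
        rw [h5]
    _ ≤ _ + ε' := add_le_add_left hlb _
end
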